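/- The family of operators T_t (T_0 = id, T_t u = Z_t * u for t > 0) built from the heat kernel of an elliptic pseudo-differential operator is a Feller semigroup on ℚ_p^n: it is a strongly continuous contraction semigroup on C₀(ℚ_p^n) such that each T_t is positivity preserving (u ≥ 0 implies T_t u ≥ 0). -/

import Mathlib

open MeasureTheory Filter Topology
open scoped ENNReal

variable {p : ℕ} [Fact p.Prime] [MeasurableSpace ℚ_[p]] [BorelSpace ℚ_[p]] {n : ℕ}

set_option linter.unusedSectionVars false
set_option linter.unusedVariables false

/-- A continuous function vanishing at infinity is bounded. -/
lemma my_bdd (u : (Fin n → ℚ_[p]) → ℝ) (hc : Continuous u)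
    (h0 : Tendsto u (cocompact (Fin n → ℚ_[p])) (𝓝 0)) :
    ∃ C, 0 ≤ C ∧ ∀ y, |u y| ≤ C := by
  have h1 : {x : ℝ | ‖x‖ < 1} ∈ 𝓝 (0:ℝ) := by
    have : Metric.ball (0:ℝ) 1 ∈ 𝓝 (0:ℝ) := Metric.ball_mem_nhds _ one_pos
    simpa [Metric.ball, dist_eq_norm] using this
  obtain ⟨K, hK, hKs⟩ := mem_cocompact.mp (h0 h1)
  obtain ⟨C, hC⟩ := hK.exists_bound_of_continuousOn hc.continuousOn
  refine ⟨max C 1, le_trans zero_le_one (le_max_right _ _), fun y => ?_⟩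
  by_cases hy : y ∈ K
  · exact le_trans (hC y hy) (le_max_left _ _)
  · have : ‖u y‖ < 1 := hKs hy
    exact le_trans this.le (le_max_right _ _)

lemma my_conv_eq (μ : Measure (Fin n → ℚ_[p])) [μ.IsAddHaarMeasure]
    (g u : (Fin n → ℚ_[p]) → ℝ) (x : Fin n → ℚ_[p]) :
    ∫ y, g (x - y) * u y ∂μ = ∫ y, g y * u (x - y) ∂μ := by
  have := integral_sub_left_eq_self (fun y => g y * u (x - y)) μ x
  simp only [_root_.sub_sub_cancel] at this
  exact this

lemma my_integrable_mul (μ : Measure (Fin n → ℚ_[p])) [μ.IsAddHaarMeasure]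
    (g u : (Fin n → ℚ_[p]) → ℝ) (hg : Integrable g μ) (hu : Continuous u)
    (C : ℝ) (hC : ∀ y, |u y| ≤ C) :
    Integrable (fun y => g y * u y) μ := by
  have := hg.bdd_mul (c := C) hu.aestronglyMeasurable (Eventually.of_forall fun y => by simpa [Real.norm_eq_abs] using hC y)
  simpa [mul_comm] using this

lemma my_contract (μ : Measure (Fin n → ℚ_[p])) [μ.IsAddHaarMeasure]
    (g u : (Fin n → ℚ_[p]) → ℝ) (hg : Integrable g μ) (hgpos : ∀ y, 0 ≤ g y)
    (hone : ∫ y, g y ∂μ = 1) (hu : Continuous u)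
    (C : ℝ) (hC0 : 0 ≤ C) (hC : ∀ y, |u y| ≤ C) (x : Fin n → ℚ_[p]) :
    |∫ y, g (x - y) * u y ∂μ| ≤ C := by
  have hgx : Integrable (fun y => g (x - y)) μ := hg.comp_sub_left x
  have hi : Integrable (fun y => g (x - y) * u y) μ :=
    my_integrable_mul μ _ u hgx hu C hC
  calc |∫ y, g (x - y) * u y ∂μ| ≤ ∫ y, |g (x - y) * u y| ∂μ := by
        simpa only [Real.norm_eq_abs] using norm_integral_le_integral_norm (fun y => g (x - y) * u y) (μ := μ)
    _ ≤ ∫ y, g (x - y) * C ∂μ := by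
        refine integral_mono hi.abs (hgx.mul_const C) (fun y => ?_)
        rw [abs_mul, abs_of_nonneg (hgpos _)]
        exact mul_le_mul_of_nonneg_left (hC y) (hgpos _)
    _ = C := by
        rw [integral_mul_const, integral_sub_left_eq_self g μ x, hone, one_mul]

lemma my_continuous (μ : Measure (Fin n → ℚ_[p])) [μ.IsAddHaarMeasure]
    (g u : (Fin n → ℚ_[p]) → ℝ) (hg : Integrable g μ) (hu : Continuous u)
    (C : ℝ) (hC : ∀ y, |u y| ≤ C) :
    Continuous (fun x => ∫ y, g (x - y) * u y ∂μ) := by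
  have : (fun x => ∫ y, g (x - y) * u y ∂μ) = fun x => ∫ y, g y * u (x - y) ∂μ := by
    funext x; exact my_conv_eq μ g u x
  rw [this]
  apply continuous_of_dominated (bound := fun y => |g y| * C)
  · intro x
    exact hg.aestronglyMeasurable.mul
      ((hu.comp (continuous_const.sub continuous_id)).aestronglyMeasurable)
  · intro x
    filter_upwards with y
    rw [Real.norm_eq_abs, abs_mul]
    exact mul_le_mul_of_nonneg_left (hC _) (abs_nonneg _)
  · exact hg.abs.mul_const C
  · filter_upwards with y
    exact continuous_const.mul (hu.comp (continuous_id.sub continuous_const))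

lemma my_tail_small (μ : Measure (Fin n → ℚ_[p])) [μ.IsAddHaarMeasure]
    (g : (Fin n → ℚ_[p]) → ℝ) (hg : Integrable g μ) (hgpos : ∀ y, 0 ≤ g y)
    (ε' : ℝ) (hε' : 0 < ε') :
    ∃ R : ℕ, ∫ y in (Metric.closedBall (0 : Fin n → ℚ_[p]) R)ᶜ, g y ∂μ < ε' := by
  set s : ℕ → Set (Fin n → ℚ_[p]) := fun i => Metric.closedBall 0 i with hs
  have hsm : ∀ i, MeasurableSet (s i) := fun i => Metric.isClosed_closedBall.measurableSet
  have hmono : Monotone s := fun i j hij =>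
    Metric.closedBall_subset_closedBall (by exact_mod_cast hij)
  have hunion : (⋃ i, s i) = Set.univ := by
    ext x
    simp only [Set.mem_iUnion, Set.mem_univ, iff_true]
    obtain ⟨i, hi⟩ := exists_nat_ge ‖x‖
    exact ⟨i, by simpa [s, Metric.mem_closedBall, dist_zero_right] using hi⟩
  have htend := tendsto_setIntegral_of_monotone hsm hmono (by rw [hunion]; exact hg.integrableOn)
  rw [hunion] at htend
  simp only [setIntegral_univ] at htend
  have h2 : ∀ᶠ i in atTop, ∫ y, g y ∂μ - ∫ y in s i, g y ∂μ < ε' := by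
    have := Metric.tendsto_nhds.mp htend ε' hε'
    filter_upwards [this] with i hi
    calc ∫ y, g y ∂μ - ∫ y in s i, g y ∂μ ≤ |∫ y in s i, g y ∂μ - ∫ y, g y ∂μ| := by
          rw [abs_sub_comm]; exact le_abs_self _
      _ < ε' := by simpa [Real.dist_eq] using hi
  obtain ⟨R, hR⟩ := h2.exists
  refine ⟨R, ?_⟩
  have := integral_add_compl (hsm R) hg
  have : ∫ y in (s R)ᶜ, g y ∂μ = ∫ y, g y ∂μ - ∫ y in s R, g y ∂μ := by linarith
  show ∫ y in (s R)ᶜ, g y ∂μ < ε'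
  rw [this]; exact hR

lemma my_vanish (μ : Measure (Fin n → ℚ_[p])) [μ.IsAddHaarMeasure]
    (g u : (Fin n → ℚ_[p]) → ℝ) (hg : Integrable g μ) (hgpos : ∀ y, 0 ≤ g y)
    (hone : ∫ y, g y ∂μ = 1) (hu : Continuous u)
    (h0 : Tendsto u (cocompact (Fin n → ℚ_[p])) (𝓝 0))
    (C : ℝ) (hC0 : 0 ≤ C) (hC : ∀ y, |u y| ≤ C) :
    Tendsto (fun x => ∫ y, g (x - y) * u y ∂μ) (cocompact (Fin n → ℚ_[p])) (𝓝 0) := by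
  rw [NormedAddCommGroup.tendsto_nhds_zero]
  intro ε hε
  -- small tail of g
  have hε4 : 0 < ε / (4 * (C + 1)) := by positivity
  obtain ⟨R₁, hR₁⟩ := my_tail_small μ g hg hgpos _ hε4
  -- u is small outside a compact set
  have hsmall : {x : ℝ | ‖x‖ < ε / 4} ∈ 𝓝 (0:ℝ) := by
    have : Metric.ball (0:ℝ) (ε/4) ∈ 𝓝 (0:ℝ) := Metric.ball_mem_nhds _ (by positivity)
    simpa [Metric.ball, dist_eq_norm] using this
  obtain ⟨K, hK, hKs⟩ := mem_cocompact.mp (h0 hsmall)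
  obtain ⟨R₂, hR₂⟩ := hK.isBounded.subset_closedBall 0
  -- the eventual estimate
  have hcpt : IsCompact (Metric.closedBall (0 : Fin n → ℚ_[p]) ((R₁ : ℝ) + |R₂|)) :=
    isCompact_closedBall _ _
  rw [eventually_iff_exists_mem]
  refine ⟨(Metric.closedBall (0 : Fin n → ℚ_[p]) ((R₁ : ℝ) + |R₂|))ᶜ,
    mem_cocompact.mpr ⟨_, hcpt, le_refl _⟩, fun x hx => ?_⟩
  have hxnorm : (R₁ : ℝ) + |R₂| < ‖x‖ := by
    simpa [Metric.mem_closedBall, dist_zero_right, not_le] using hx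
  -- pointwise estimate
  have hgx : Integrable (fun y => g (x - y)) μ := hg.comp_sub_left x
  have habs : Integrable (fun y => g y * |u (x - y)|) μ :=
    my_integrable_mul μ g (fun w => |u (x - w)|) hg
      ((hu.comp (continuous_const.sub continuous_id)).abs)
      C (fun y => by simpa [abs_abs] using hC (x - y))
  have key : ‖∫ y, g (x - y) * u y ∂μ‖ ≤ ∫ y, g y * |u (x - y)| ∂μ := by
    rw [my_conv_eq μ g u x]
    calc ‖∫ y, g y * u (x - y) ∂μ‖ ≤ ∫ y, ‖g y * u (x - y)‖ ∂μ :=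
          norm_integral_le_integral_norm _
      _ = ∫ y, g y * |u (x - y)| ∂μ := by
          congr 1; funext y
          rw [Real.norm_eq_abs, abs_mul, abs_of_nonneg (hgpos y)]
  set s := Metric.closedBall (0 : Fin n → ℚ_[p]) R₁ with hsdef
  have hsm : MeasurableSet s := Metric.isClosed_closedBall.measurableSet
  have hsplit : ∫ y, g y * |u (x - y)| ∂μ
      = ∫ y in s, g y * |u (x - y)| ∂μ + ∫ y in sᶜ, g y * |u (x - y)| ∂μ :=
    (integral_add_compl hsm habs).symm
  -- on s : `u (x - y)` is small
  have h1 : ∫ y in s, g y * |u (x - y)| ∂μ ≤ ε / 4 := by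
    have hb : ∀ y ∈ s, g y * |u (x - y)| ≤ g y * (ε / 4) := by
      intro y hy
      rw [hsdef] at hy
      have hynorm : ‖y‖ ≤ R₁ := by simpa [Metric.mem_closedBall, dist_zero_right] using hy
      have : (|R₂| : ℝ) < ‖x - y‖ := by
        have := norm_sub_norm_le x y
        linarith
      have hxy : x - y ∉ K := by
        intro hmem
        have := hR₂ hmem
        simp only [Metric.mem_closedBall, dist_zero_right] at this
        have : ‖x - y‖ ≤ |R₂| := this.trans (le_abs_self _)
        linarith
      have := hKs hxy
      simp only [Set.mem_setOf_eq, Real.norm_eq_abs] at this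
      exact mul_le_mul_of_nonneg_left this.le (hgpos y)
    calc ∫ y in s, g y * |u (x - y)| ∂μ ≤ ∫ y in s, g y * (ε / 4) ∂μ :=
          setIntegral_mono_on habs.integrableOn (hg.mul_const _).integrableOn hsm hb
      _ = (∫ y in s, g y ∂μ) * (ε / 4) := integral_mul_const _ _
      _ ≤ 1 * (ε / 4) := by
          refine mul_le_mul_of_nonneg_right ?_ (by positivity)
          rw [← hone]
          exact setIntegral_le_integral hg (by filter_upwards with y using hgpos y)
      _ = ε / 4 := one_mul _
  -- off s : the tail of g is small
  have h2 : ∫ y in sᶜ, g y * |u (x - y)| ∂μ ≤ ε / 4 := by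
    have hb : ∀ y ∈ sᶜ, g y * |u (x - y)| ≤ g y * C := fun y _ =>
      mul_le_mul_of_nonneg_left (hC _) (hgpos y)
    calc ∫ y in sᶜ, g y * |u (x - y)| ∂μ ≤ ∫ y in sᶜ, g y * C ∂μ :=
          setIntegral_mono_on habs.integrableOn ((hg.mul_const _).integrableOn) hsm.compl hb
      _ = (∫ y in sᶜ, g y ∂μ) * C := integral_mul_const _ _
      _ ≤ (ε / (4 * (C + 1))) * C := by
          refine mul_le_mul_of_nonneg_right hR₁.le hC0
      _ ≤ ε / 4 := by
          rw [div_mul_eq_mul_div, div_le_div_iff₀ (by positivity) (by positivity)]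
          ring_nf
          nlinarith
  calc ‖∫ y, g (x - y) * u y ∂μ‖ ≤ _ := key
    _ = _ + _ := hsplit
    _ ≤ ε / 4 + ε / 4 := add_le_add h1 h2
    _ < ε := by linarith

lemma my_semigroup_core (μ : Measure (Fin n → ℚ_[p])) [μ.IsAddHaarMeasure]
    (g h u : (Fin n → ℚ_[p]) → ℝ)
    (hgc : Continuous g) (hgi : Integrable g μ) (hgpos : ∀ y, 0 ≤ g y)
    (hhc : Continuous h) (hhi : Integrable h μ) (hhpos : ∀ y, 0 ≤ h y)
    (hhone : ∫ y, h y ∂μ = 1)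
    (hu : Continuous u) (C : ℝ) (hC0 : 0 ≤ C) (hC : ∀ y, |u y| ≤ C)
    (x : Fin n → ℚ_[p]) :
    ∫ y, (∫ w, g (x - w) * h (w - y) ∂μ) * u y ∂μ
      = ∫ w, g (x - w) * (∫ y, h (w - y) * u y ∂μ) ∂μ := by
  set F : (Fin n → ℚ_[p]) × (Fin n → ℚ_[p]) → ℝ :=
    fun q => g (x - q.2) * h (q.2 - q.1) * u q.1 with hF
  have hFc : Continuous F := by
    apply Continuous.mul
    apply Continuous.mul
    · exact hgc.comp (continuous_const.sub continuous_snd)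
    · exact hhc.comp (continuous_snd.sub continuous_fst)
    · exact hu.comp continuous_fst
  have hFm : AEStronglyMeasurable F (μ.prod μ) := hFc.aestronglyMeasurable
  -- integrability of F on the product
  have hslice : ∀ w, Integrable (fun y => F (y, w)) μ := by
    intro w
    have : Integrable (fun y => h (w - y) * u y) μ :=
      my_integrable_mul μ (fun y => h (w - y)) u (hhi.comp_sub_left w) hu C hC
    have := this.const_mul (g (x - w))
    refine this.congr ?_
    filter_upwards with y
    simp only [hF]; ring
  have hFi : Integrable F (μ.prod μ) := by
    rw [integrable_prod_iff' hFm]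
    constructor
    · filter_upwards with w using hslice w
    · -- the function w ↦ ∫ y, ‖F (y, w)‖ is dominated by g (x - w) * C
      have hmaj : Integrable (fun w => g (x - w) * C) μ := (hgi.comp_sub_left x).mul_const C
      refine hmaj.mono ?_ ?_
      · exact (MeasureTheory.StronglyMeasurable.integral_prod_left' (μ := μ) hFc.norm.stronglyMeasurable).aestronglyMeasurable
      · filter_upwards with w
        have h1 : ∫ y, ‖F (y, w)‖ ∂μ = g (x - w) * ∫ y, h (w - y) * |u y| ∂μ := by
          rw [← integral_const_mul]
          congr 1; funext y
          simp only [hF, Real.norm_eq_abs, abs_mul,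
            abs_of_nonneg (hgpos (x - w)), abs_of_nonneg (hhpos (w - y))]
          ring
        have h2 : ∫ y, h (w - y) * |u y| ∂μ ≤ C := by
          have := my_contract μ h (fun y => |u y|) hhi hhpos hhone hu.abs C hC0
            (fun y => by simpa [abs_abs] using hC y) w
          exact (le_abs_self _).trans this
        have h3 : 0 ≤ ∫ y, ‖F (y, w)‖ ∂μ := integral_nonneg fun y => norm_nonneg _
        rw [Real.norm_eq_abs, abs_of_nonneg h3, h1, Real.norm_eq_abs]
        calc g (x - w) * ∫ y, h (w - y) * |u y| ∂μ ≤ g (x - w) * C :=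
              mul_le_mul_of_nonneg_left h2 (hgpos _)
          _ ≤ |g (x - w) * C| := le_abs_self _
  -- Fubini
  have hswap : ∫ y, ∫ w, F (y, w) ∂μ ∂μ = ∫ w, ∫ y, F (y, w) ∂μ ∂μ :=
    integral_integral_swap hFi
  calc ∫ y, (∫ w, g (x - w) * h (w - y) ∂μ) * u y ∂μ
      = ∫ y, ∫ w, F (y, w) ∂μ ∂μ := by
        congr 1; funext y
        rw [← integral_mul_const]
    _ = ∫ w, ∫ y, F (y, w) ∂μ ∂μ := hswap
    _ = ∫ w, g (x - w) * (∫ y, h (w - y) * u y ∂μ) ∂μ := by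
        congr 1; funext w
        rw [← integral_const_mul]
        congr 1; funext y
        simp only [hF]; ring

lemma my_one_dim (k : ℤ) (x : ℚ_[p]) (hx : ‖x‖ ≤ (p : ℝ) ^ k) :
    ∃ j : Fin p, ‖x - (j : ℚ_[p]) * (p : ℚ_[p]) ^ (-k)‖ ≤ (p : ℝ) ^ (k - 1) := by
  have hp := Fact.out (p := p.Prime)
  have hp0 : (p : ℚ_[p]) ≠ 0 := Nat.cast_ne_zero.mpr hp.ne_zero
  have hpR : (1 : ℝ) < p := by exact_mod_cast hp.one_lt
  set z : ℚ_[p] := x * (p : ℚ_[p]) ^ k with hz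
  have hz1 : ‖z‖ ≤ 1 := by
    rw [hz, norm_mul, Padic.norm_p_zpow]
    calc ‖x‖ * (p : ℝ) ^ (-k) ≤ (p : ℝ) ^ k * (p : ℝ) ^ (-k) :=
          mul_le_mul_of_nonneg_right hx (zpow_nonneg (by positivity) _)
      _ = 1 := by rw [← zpow_add₀ (by positivity : (p:ℝ) ≠ 0)]; simp
  set zz : ℤ_[p] := ⟨z, hz1⟩ with hzz
  have hlt : zz.appr 1 < p := by simpa using zz.appr_lt 1
  refine ⟨⟨zz.appr 1, hlt⟩, ?_⟩
  have hspec : ‖zz - (zz.appr 1 : ℤ_[p])‖ ≤ (p : ℝ) ^ (-(1:ℤ)) := by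
    rw [show (-(1:ℤ)) = -((1:ℕ):ℤ) by norm_num]
    exact (PadicInt.norm_le_pow_iff_mem_span_pow _ 1).mpr (by simpa using zz.appr_spec 1)
  have hcoe : ‖z - ((zz.appr 1 : ℕ) : ℚ_[p])‖ ≤ (p : ℝ) ^ (-(1:ℤ)) := by
    have : ((zz - (zz.appr 1 : ℤ_[p]) : ℤ_[p]) : ℚ_[p]) = z - ((zz.appr 1 : ℕ) : ℚ_[p]) := by
      rw [PadicInt.coe_sub, PadicInt.coe_natCast]
    calc ‖z - ((zz.appr 1 : ℕ) : ℚ_[p])‖ = ‖zz - (zz.appr 1 : ℤ_[p])‖ := by rw [← this]; rfl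
      _ ≤ _ := hspec
  have hxz : x = z * (p : ℚ_[p]) ^ (-k) := by
    rw [hz, mul_assoc, ← zpow_add₀ hp0]
    simp
  have key : x - ((zz.appr 1 : ℕ) : ℚ_[p]) * (p : ℚ_[p]) ^ (-k)
      = (z - ((zz.appr 1 : ℕ) : ℚ_[p])) * (p : ℚ_[p]) ^ (-k) := by
    rw [hxz]; ring
  simp only [Fin.val_mk]
  rw [key, norm_mul, Padic.norm_p_zpow, neg_neg]
  calc ‖z - ((zz.appr 1 : ℕ) : ℚ_[p])‖ * (p : ℝ) ^ k
      ≤ (p : ℝ) ^ (-(1:ℤ)) * (p : ℝ) ^ k :=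
        mul_le_mul_of_nonneg_right hcoe (zpow_nonneg (by positivity) _)
    _ = (p : ℝ) ^ (k - 1) := by
        rw [← zpow_add₀ (by positivity : (p:ℝ) ≠ 0)]
        congr 1; ring

lemma my_one_dim_disj (k : ℤ) (j j' : Fin p) (hne : j ≠ j') (x : ℚ_[p])
    (h1 : ‖x - (j : ℚ_[p]) * (p : ℚ_[p]) ^ (-k)‖ ≤ (p : ℝ) ^ (k - 1))
    (h2 : ‖x - (j' : ℚ_[p]) * (p : ℚ_[p]) ^ (-k)‖ ≤ (p : ℝ) ^ (k - 1)) : False := by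
  have hp := Fact.out (p := p.Prime)
  have hpR : (1 : ℝ) < p := by exact_mod_cast hp.one_lt
  set m : ℤ := (j : ℤ) - (j' : ℤ) with hm
  have hm0 : m ≠ 0 := sub_ne_zero.mpr (by exact_mod_cast Fin.val_ne_of_ne hne)
  have hmabs : |m| < p := by
    rw [abs_sub_lt_iff]
    constructor <;> [skip; skip] <;>
      · have := j.isLt; have := j'.isLt; omega
  have hndvd : ¬ ((p : ℤ) ∣ m) := by
    intro hdvd
    have := Int.le_of_dvd (abs_pos.mpr hm0) ((dvd_abs _ _).mpr hdvd)
    omega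
  have hnorm1 : ‖(m : ℚ_[p])‖ = 1 := by
    refine le_antisymm (Padic.norm_int_le_one m) ?_
    by_contra hlt
    push_neg at hlt
    exact hndvd (Padic.norm_intCast_lt_one_iff.mp hlt)
  have hdiff : (x - (j' : ℚ_[p]) * (p : ℚ_[p]) ^ (-k)) - (x - (j : ℚ_[p]) * (p : ℚ_[p]) ^ (-k))
      = (m : ℚ_[p]) * (p : ℚ_[p]) ^ (-k) := by
    push_cast [hm]
    ring
  have hd2 : ‖(m : ℚ_[p]) * (p : ℚ_[p]) ^ (-k)‖ = (p : ℝ) ^ k := by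
    rw [norm_mul, hnorm1, one_mul, Padic.norm_p_zpow, neg_neg]
  have hle : ‖(m : ℚ_[p]) * (p : ℚ_[p]) ^ (-k)‖ ≤ (p : ℝ) ^ (k - 1) := by
    rw [← hdiff, sub_eq_add_neg]
    refine le_trans (Padic.nonarchimedean _ _) ?_
    rw [norm_neg]
    exact max_le h2 h1
  rw [hd2] at hle
  have : (p : ℝ) ^ (k - 1) < (p : ℝ) ^ k := zpow_lt_zpow_right₀ hpR (by omega)
  linarith

/-- The closed ball of radius `p^k` in `ℚ_p^n`. -/
def myBall (p : ℕ) [Fact p.Prime] (n : ℕ) (k : ℤ) : Set (Fin n → ℚ_[p]) := {y | ‖y‖ ≤ (p : ℝ) ^ k}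

lemma myBall_eq_closedBall (k : ℤ) :
    myBall p n k = Metric.closedBall (0 : Fin n → ℚ_[p]) ((p : ℝ) ^ k) := by
  ext y
  simp [myBall, Metric.mem_closedBall, dist_zero_right]

lemma myBall_measurableSet (k : ℤ) : MeasurableSet (myBall p n k) := by
  rw [myBall_eq_closedBall]
  exact Metric.isClosed_closedBall.measurableSet

lemma myBall_compact (k : ℤ) : IsCompact (myBall p n (k : ℤ)) := by
  rw [myBall_eq_closedBall]
  exact isCompact_closedBall _ _

lemma mem_myBall_iff (k : ℤ) (y : Fin n → ℚ_[p]) :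
    y ∈ myBall p n k ↔ ∀ i, ‖y i‖ ≤ (p : ℝ) ^ k := by
  have hp := Fact.out (p := p.Prime)
  have h0 : (0:ℝ) ≤ (p : ℝ) ^ k := zpow_nonneg (by positivity) _
  exact pi_norm_le_iff_of_nonneg h0

lemma myBall_step (μ : Measure (Fin n → ℚ_[p])) [μ.IsAddHaarMeasure] (k : ℤ) :
    μ (myBall p n k) = (p : ℝ≥0∞) ^ n * μ (myBall p n (k - 1)) := by
  have hp := Fact.out (p := p.Prime)
  have hpR0 : (0:ℝ) < p := by exact_mod_cast hp.pos
  set e : (Fin n → Fin p) → (Fin n → ℚ_[p]) :=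
    fun c i => ((c i : ℕ) : ℚ_[p]) * (p : ℚ_[p]) ^ (-k) with he
  set S : (Fin n → Fin p) → Set (Fin n → ℚ_[p]) :=
    fun c => (fun y => -(e c) + y) ⁻¹' (myBall p n (k - 1)) with hS
  have hunion : myBall p n k = ⋃ c, S c := by
    ext y
    constructor
    · intro hy
      rw [mem_myBall_iff] at hy
      choose c hc using fun i => my_one_dim k (y i) (hy i)
      refine Set.mem_iUnion.mpr ⟨c, ?_⟩
      simp only [hS, Set.mem_preimage]
      rw [mem_myBall_iff]
      intro i
      simpa [he, neg_add_eq_sub] using hc i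
    · intro hy
      obtain ⟨c, hc⟩ := Set.mem_iUnion.mp hy
      simp only [hS, Set.mem_preimage] at hc
      rw [mem_myBall_iff] at hc ⊢
      intro i
      have h1 : ‖y i - e c i‖ ≤ (p : ℝ) ^ (k - 1) := by
        simpa [neg_add_eq_sub] using hc i
      have h2 : ‖e c i‖ ≤ (p : ℝ) ^ k := by
        rw [he]
        simp only []
        rw [norm_mul, Padic.norm_p_zpow, neg_neg]
        calc ‖((c i : ℕ) : ℚ_[p])‖ * (p:ℝ) ^ k ≤ 1 * (p:ℝ) ^ k := by
              refine mul_le_mul_of_nonneg_right ?_ (zpow_nonneg (by positivity) _)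
              exact_mod_cast Padic.norm_int_le_one ((c i : ℕ) : ℤ)
          _ = (p:ℝ) ^ k := one_mul _
      calc ‖y i‖ = ‖(y i - e c i) + e c i‖ := by rw [sub_add_cancel]
        _ ≤ max ‖y i - e c i‖ ‖e c i‖ := Padic.nonarchimedean _ _
        _ ≤ (p : ℝ) ^ k := max_le
            (h1.trans (zpow_le_zpow_right₀ (show (1:ℝ) ≤ p by exact_mod_cast hp.one_lt.le) (by omega))) h2
  have hdisj : Pairwise (Function.onFun Disjoint S) := by
    intro c c' hne
    rw [Function.onFun, Set.disjoint_left]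
    intro y hy hy'
    obtain ⟨i, hi⟩ := Function.ne_iff.mp hne
    simp only [hS, Set.mem_preimage] at hy hy'
    rw [mem_myBall_iff] at hy hy'
    refine my_one_dim_disj k (c i) (c' i) hi (y i) ?_ ?_
    · simpa [he, neg_add_eq_sub] using hy i
    · simpa [he, neg_add_eq_sub] using hy' i
  have hmeas : ∀ c, MeasurableSet (S c) := fun c =>
    (myBall_measurableSet (p := p) (n := n) (k - 1)).preimage (measurable_const_add (-(e c)))
  have htrans : ∀ c, μ (S c) = μ (myBall p n (k - 1)) := by
    intro c
    exact measure_preimage_add μ (-(e c)) _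
  rw [hunion, measure_iUnion hdisj hmeas]
  rw [tsum_fintype]
  simp only [htrans]
  rw [Finset.sum_const, Finset.card_univ]
  have hcard : Fintype.card (Fin n → Fin p) = p ^ n := by simp
  rw [hcard, nsmul_eq_mul]
  push_cast
  ring

lemma myBall_measure_pow (μ : Measure (Fin n → ℚ_[p])) [μ.IsAddHaarMeasure] (k₁ : ℤ) (m : ℕ) :
    μ (myBall p n (k₁ + m)) = (p : ℝ≥0∞) ^ (n * m) * μ (myBall p n k₁) := by
  induction m with
  | zero => simp
  | succ m ih =>
      have := myBall_step μ (k₁ + (m + 1))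
      have heq : (k₁ + ((m : ℤ) + 1)) - 1 = k₁ + m := by ring
      rw [heq] at this
      rw [show ((m + 1 : ℕ) : ℤ) = (m : ℤ) + 1 by push_cast; ring, this, ih,
        ← mul_assoc, ← pow_add]
      congr 2
      ring

lemma my_tail (μ : Measure (Fin n → ℚ_[p])) [μ.IsAddHaarMeasure] (k₁ : ℤ) (s : ℝ)
    (hs : (n : ℝ) < s) :
    ∃ K : ℝ, 0 ≤ K ∧ ∀ (a : ℝ) (f : (Fin n → ℚ_[p]) → ℝ), 0 ≤ a → Integrable f μ →
      (∀ y, 0 ≤ f y) → (∀ y, y ≠ 0 → f y ≤ a * ‖y‖ ^ (-s)) →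
      ∫ y in {y | (p : ℝ) ^ k₁ < ‖y‖}, f y ∂μ ≤ a * K := by
  have hp := Fact.out (p := p.Prime)
  set r : ℝ := (p : ℝ) with hr
  have hr1 : 1 < r := by rw [hr]; exact_mod_cast hp.one_lt
  have hr0 : 0 < r := lt_trans one_pos hr1
  set q : ℝ := r ^ ((n : ℝ) - s) with hq
  have hq0 : 0 ≤ q := Real.rpow_nonneg hr0.le _
  have hq1 : q < 1 := Real.rpow_lt_one_of_one_lt_of_neg hr1 (by linarith)
  set M₀ : ℝ := (μ (myBall p n k₁)).toReal with hM₀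
  have hM₀0 : 0 ≤ M₀ := ENNReal.toReal_nonneg
  refine ⟨M₀ * r ^ ((n : ℝ) - s * k₁) * (1 - q)⁻¹,
    mul_nonneg (mul_nonneg hM₀0 (Real.rpow_nonneg hr0.le _)) (inv_nonneg.mpr (by linarith)),
    fun a f ha hf hfpos hfle => ?_⟩
  -- the shells
  set S : ℕ → Set (Fin n → ℚ_[p]) :=
    fun m => myBall p n (k₁ + m + 1) \ myBall p n (k₁ + m) with hS
  have hSmeas : ∀ m, MeasurableSet (S m) :=
    fun m => ((myBall_measurableSet _).diff (myBall_measurableSet _))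
  have hSmem : ∀ m y, y ∈ S m ↔ r ^ (k₁ + m : ℤ) < ‖y‖ ∧ ‖y‖ ≤ r ^ (k₁ + m + 1 : ℤ) := by
    intro m y
    simp only [hS, Set.mem_diff, myBall, Set.mem_setOf_eq, not_le, hr]
    tauto
  have hSdisj : Pairwise (Function.onFun Disjoint S) := by
    have haux : ∀ m m' : ℕ, m < m' → Disjoint (S m) (S m') := by
      intro m m' hmm'
      rw [Set.disjoint_left]
      intro y hy hy'
      rw [hSmem] at hy hy'
      have h1 : r ^ (k₁ + m + 1 : ℤ) ≤ r ^ (k₁ + m' : ℤ) :=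
        zpow_le_zpow_right₀ hr1.le (by omega)
      linarith [hy.2, hy'.1]
    intro m m' hne
    rcases lt_or_gt_of_ne hne with h | h
    · exact haux m m' h
    · exact (haux m' m h).symm
  have hregion : {y : Fin n → ℚ_[p] | (p : ℝ) ^ k₁ < ‖y‖} = ⋃ m, S m := by
    ext y
    simp only [Set.mem_setOf_eq, Set.mem_iUnion]
    constructor
    · intro hy
      have hnonempty : ∃ m : ℕ, ‖y‖ ≤ r ^ (k₁ + m + 1 : ℤ) := by
        obtain ⟨m, hm⟩ := pow_unbounded_of_one_lt (‖y‖ * r ^ (-(k₁ + 1)) ) hr1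
        refine ⟨m, ?_⟩
        have : ‖y‖ * r ^ (-(k₁+1)) ≤ r ^ (m : ℤ) := by
          rw [zpow_natCast]; exact hm.le
        calc ‖y‖ = ‖y‖ * r ^ (-(k₁+1)) * r ^ (k₁+1) := by
              rw [mul_assoc, ← zpow_add₀ hr0.ne', neg_add_cancel, zpow_zero, mul_one]
          _ ≤ r ^ (m : ℤ) * r ^ (k₁+1) :=
              mul_le_mul_of_nonneg_right this (zpow_nonneg hr0.le _)
          _ = r ^ (k₁ + m + 1 : ℤ) := by rw [← zpow_add₀ hr0.ne']; congr 1; ring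
      set m₀ := Nat.find hnonempty with hm₀
      refine ⟨m₀, (hSmem m₀ y).mpr ⟨?_, Nat.find_spec hnonempty⟩⟩
      rcases Nat.eq_zero_or_pos m₀ with h0 | h0
      · rw [h0]
        simpa using hy
      · have := Nat.find_min hnonempty (Nat.sub_lt h0 one_pos)
        push_neg at this
        have heq : (k₁ + (m₀ - 1 : ℕ) + 1 : ℤ) = k₁ + m₀ := by omega
        rw [heq] at this
        exact this
    · rintro ⟨m, hm⟩
      rw [hSmem] at hm
      calc (p:ℝ) ^ k₁ ≤ r ^ (k₁ + m : ℤ) := zpow_le_zpow_right₀ hr1.le (by omega)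
        _ < ‖y‖ := hm.1
  -- decompose the integral
  rw [hregion, integral_iUnion hSmeas hSdisj hf.integrableOn]
  -- bound each piece
  set T : ℕ → ℝ := fun m =>
    a * r ^ (-s * ((k₁ : ℝ) + m)) * (r ^ ((n : ℝ) * (m + 1)) * M₀) with hT
  have hTgeom : ∀ m, T m = (a * M₀ * r ^ ((n : ℝ) - s * k₁)) * q ^ m := by
    intro m
    rw [hT, hq]
    simp only []
    rw [← Real.rpow_natCast (r ^ ((n:ℝ) - s)) m, ← Real.rpow_mul hr0.le]
    have hx : r ^ (-s * ((k₁:ℝ) + m)) * r ^ ((n:ℝ) * (m + 1))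
        = r ^ ((n:ℝ) - s * k₁) * r ^ (((n:ℝ) - s) * m) := by
      rw [← Real.rpow_add hr0, ← Real.rpow_add hr0]
      congr 1
      ring
    linear_combination (a * M₀) * hx
  have hTsummable : Summable T := by
    apply Summable.congr (summable_geometric_of_lt_one hq0 hq1 |>.mul_left
      (a * M₀ * r ^ ((n : ℝ) - s * k₁)))
    intro m
    rw [hTgeom m]
  have hpiece : ∀ m, ∫ y in S m, f y ∂μ ≤ T m := by
    intro m
    have hfin : μ (S m) < ⊤ :=
      lt_of_le_of_lt (measure_mono Set.diff_subset) (myBall_compact (k₁ + m + 1)).measure_lt_top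
    have hbd : ∀ y ∈ S m, ‖f y‖ ≤ a * r ^ (-s * ((k₁ : ℝ) + m)) := by
      intro y hy
      rw [hSmem] at hy
      have hy0 : (0:ℝ) < ‖y‖ := lt_of_le_of_lt (zpow_nonneg hr0.le _) hy.1
      have hyne : y ≠ 0 := by simpa using norm_pos_iff.mp hy0
      have h1 : f y ≤ a * ‖y‖ ^ (-s) := hfle y hyne
      have h2 : ‖y‖ ^ (-s) ≤ (r ^ (k₁ + m : ℤ)) ^ (-s) :=
        Real.rpow_le_rpow_of_nonpos (zpow_pos hr0 _) hy.1.le (by linarith [hs, Nat.cast_nonneg (α := ℝ) n])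
      have h3 : (r ^ (k₁ + m : ℤ)) ^ (-s) = r ^ (-s * ((k₁ : ℝ) + m)) := by
        rw [← Real.rpow_intCast r (k₁ + m), ← Real.rpow_mul hr0.le]
        congr 1
        push_cast
        ring
      rw [Real.norm_eq_abs, abs_of_nonneg (hfpos y)]
      calc f y ≤ a * ‖y‖ ^ (-s) := h1
        _ ≤ a * (r ^ (k₁ + m : ℤ)) ^ (-s) := mul_le_mul_of_nonneg_left h2 ha
        _ = a * r ^ (-s * ((k₁ : ℝ) + m)) := by rw [h3]
    have hmuS : (μ (S m)).toReal ≤ r ^ ((n : ℝ) * (m + 1)) * M₀ := by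
      have hsub : S m ⊆ myBall p n (k₁ + ((m + 1 : ℕ) : ℤ)) := by
        intro y hy
        simp only [hS, Set.mem_diff] at hy
        have heq : (k₁ + ((m + 1 : ℕ) : ℤ)) = k₁ + m + 1 := by push_cast; ring
        rw [heq]
        exact hy.1
      have h1 : μ (S m) ≤ μ (myBall p n (k₁ + ((m + 1 : ℕ) : ℤ))) := measure_mono hsub
      have h2 := myBall_measure_pow μ k₁ (m + 1)
      have hfin2 : μ (myBall p n (k₁ + ((m + 1 : ℕ) : ℤ))) ≠ ⊤ :=
        (myBall_compact _).measure_lt_top.ne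
      have h3 : (μ (myBall p n (k₁ + ((m + 1 : ℕ) : ℤ)))).toReal
          = r ^ ((n : ℝ) * (m + 1)) * M₀ := by
        rw [h2, ENNReal.toReal_mul, hM₀]
        congr 1
        rw [ENNReal.toReal_pow, ENNReal.toReal_natCast]
        rw [← Real.rpow_natCast r (n * (m + 1))]
        congr 1
        push_cast; ring
      rw [← h3]
      exact ENNReal.toReal_mono hfin2 h1
    calc ∫ y in S m, f y ∂μ ≤ ‖∫ y in S m, f y ∂μ‖ := le_abs_self _
      _ ≤ (a * r ^ (-s * ((k₁ : ℝ) + m))) * (μ (S m)).toReal :=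
          norm_setIntegral_le_of_norm_le_const hfin hbd
      _ ≤ (a * r ^ (-s * ((k₁ : ℝ) + m))) * (r ^ ((n : ℝ) * (m + 1)) * M₀) := by
          refine mul_le_mul_of_nonneg_left hmuS (by positivity)
      _ = T m := by rw [hT]
  have hintsummable : Summable fun m => ∫ y in S m, f y ∂μ := by
    refine Summable.of_nonneg_of_le (fun m => setIntegral_nonneg (hSmeas m) fun y _ => hfpos y)
      hpiece hTsummable
  calc ∑' m, ∫ y in S m, f y ∂μ ≤ ∑' m, T m := Summable.tsum_le_tsum hpiece hintsummable hTsummable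
    _ = (a * M₀ * r ^ ((n : ℝ) - s * k₁)) * (1 - q)⁻¹ := by
        rw [tsum_congr hTgeom, tsum_mul_left, tsum_geometric_of_lt_one hq0 hq1]
    _ = a * (M₀ * r ^ ((n : ℝ) - s * k₁) * (1 - q)⁻¹) := by ring

lemma my_strong (μ : Measure (Fin n → ℚ_[p])) [μ.IsAddHaarMeasure]
    (Z : ℝ → (Fin n → ℚ_[p]) → ℝ)
    (hposZ : ∀ t : ℝ, 0 < t → ∀ x, 0 ≤ Z t x)
    (hint : ∀ t : ℝ, 0 < t → Integrable (Z t) μ)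
    (hone : ∀ t : ℝ, 0 < t → ∫ x, Z t x ∂μ = 1)
    (A d β : ℝ) (hA : 0 < A) (hd : 0 < d) (hβ : 0 < β)
    (hdecay : ∀ t : ℝ, 0 < t → ∀ x : Fin n → ℚ_[p], x ≠ 0 →
      Z t x ≤ A * t * ‖x‖ ^ (-(d * β) - (n : ℝ)))
    (u : (Fin n → ℚ_[p]) → ℝ) (hu : Continuous u)
    (h0 : Tendsto u (cocompact (Fin n → ℚ_[p])) (𝓝 0))
    (ε : ℝ) (hε : 0 < ε) :
    ∃ δ : ℝ, 0 < δ ∧ ∀ t : ℝ, 0 < t → t < δ →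
      ∀ x, |(∫ y, Z t (x - y) * u y ∂μ) - u x| ≤ ε := by
  have hp := Fact.out (p := p.Prime)
  have hr1 : (1:ℝ) < p := by exact_mod_cast hp.one_lt
  obtain ⟨M, hM0, hM⟩ := my_bdd u hu h0
  have ucont := hu.uniformContinuous_of_tendsto_cocompact h0
  rw [Metric.uniformContinuous_iff] at ucont
  obtain ⟨δ₀, hδ₀, hδ₀'⟩ := ucont (ε/2) (by positivity)
  -- choose `k₁` with `p ^ k₁ < δ₀`
  obtain ⟨m, hm⟩ := pow_unbounded_of_one_lt (1/δ₀) hr1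
  set k₁ : ℤ := -m with hk₁
  have hk₁' : (p:ℝ) ^ k₁ < δ₀ := by
    rw [hk₁, zpow_neg, zpow_natCast]
    rw [div_lt_iff₀ hδ₀] at hm
    rw [inv_lt_iff_one_lt_mul₀ (by positivity)]
    linarith [hm]
  -- tail estimate
  obtain ⟨K, hK0, hKtail⟩ := my_tail μ k₁ (d * β + n) (by nlinarith)
  set δ : ℝ := ε / (2 * (2 * M * A * K + 1)) with hδ
  have hδpos : 0 < δ := by positivity
  refine ⟨δ, hδpos, fun t ht htδ x => ?_⟩
  -- rewrite the integral
  have hZi := hint t ht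
  have hZpos := hposZ t ht
  have hrw : ∫ y, Z t (x - y) * u y ∂μ = ∫ y, Z t y * u (x - y) ∂μ := my_conv_eq μ (Z t) u x
  have hux : u x = ∫ y, Z t y * u x ∂μ := by
    rw [integral_mul_const, hone t ht, one_mul]
  have hint1 : Integrable (fun y => Z t y * u (x - y)) μ :=
    my_integrable_mul μ (Z t) (fun y => u (x - y)) hZi
      (hu.comp (continuous_const.sub continuous_id)) M (fun y => hM (x - y))
  have hint2 : Integrable (fun y => Z t y * u x) μ := hZi.mul_const (u x)
  have hdiff : (∫ y, Z t (x - y) * u y ∂μ) - u x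
      = ∫ y, Z t y * (u (x - y) - u x) ∂μ := by
    rw [hrw]
    conv_lhs => rw [hux]
    rw [← integral_sub hint1 hint2]
    congr 1; funext y; ring
  rw [hdiff]
  -- the integrand with absolute values
  have habs : Integrable (fun y => Z t y * |u (x - y) - u x|) μ := by
    refine my_integrable_mul μ (Z t) (fun y => |u (x - y) - u x|) hZi
      (((hu.comp (continuous_const.sub continuous_id)).sub continuous_const).abs)
      (2 * M) (fun y => ?_)
    rw [abs_abs]
    calc |u (x - y) - u x| ≤ |u (x - y)| + |u x| := abs_sub _ _
      _ ≤ M + M := add_le_add (hM _) (hM _)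
      _ = 2 * M := by ring
  have hkey : |∫ y, Z t y * (u (x - y) - u x) ∂μ|
      ≤ ∫ y, Z t y * |u (x - y) - u x| ∂μ := by
    calc |∫ y, Z t y * (u (x - y) - u x) ∂μ| ≤ ∫ y, ‖Z t y * (u (x - y) - u x)‖ ∂μ := by
          simpa only [Real.norm_eq_abs] using
            norm_integral_le_integral_norm (fun y => Z t y * (u (x - y) - u x)) (μ := μ)
      _ = ∫ y, Z t y * |u (x - y) - u x| ∂μ := by
          congr 1; funext y
          rw [Real.norm_eq_abs, abs_mul, abs_of_nonneg (hZpos y)]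
  -- split into near and far parts
  set sB := myBall p n k₁ with hsB
  have hsm : MeasurableSet sB := myBall_measurableSet k₁
  have hsplit : ∫ y, Z t y * |u (x - y) - u x| ∂μ
      = (∫ y in sB, Z t y * |u (x - y) - u x| ∂μ)
        + ∫ y in sBᶜ, Z t y * |u (x - y) - u x| ∂μ := (integral_add_compl hsm habs).symm
  have h1 : ∫ y in sB, Z t y * |u (x - y) - u x| ∂μ ≤ ε / 2 := by
    have hb : ∀ y ∈ sB, Z t y * |u (x - y) - u x| ≤ Z t y * (ε / 2) := by
      intro y hy
      have hyd : dist (x - y) x < δ₀ := by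
        rw [dist_eq_norm]
        have : x - y - x = -y := by ring
        rw [this, norm_neg]
        exact lt_of_le_of_lt hy hk₁'
      have := hδ₀' hyd
      rw [Real.dist_eq] at this
      exact mul_le_mul_of_nonneg_left this.le (hZpos y)
    calc ∫ y in sB, Z t y * |u (x - y) - u x| ∂μ ≤ ∫ y in sB, Z t y * (ε / 2) ∂μ :=
          setIntegral_mono_on habs.integrableOn (hZi.mul_const _).integrableOn hsm hb
      _ = (∫ y in sB, Z t y ∂μ) * (ε / 2) := integral_mul_const _ _
      _ ≤ 1 * (ε / 2) := by
          refine mul_le_mul_of_nonneg_right ?_ (by positivity)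
          rw [← hone t ht]
          exact setIntegral_le_integral hZi (by filter_upwards with y using hZpos y)
      _ = ε / 2 := one_mul _
  have h2 : ∫ y in sBᶜ, Z t y * |u (x - y) - u x| ∂μ ≤ ε / 2 := by
    have hcompl : sBᶜ = {y : Fin n → ℚ_[p] | (p:ℝ) ^ k₁ < ‖y‖} := by
      ext y
      simp [hsB, myBall, not_le]
    have htail : ∫ y in sBᶜ, Z t y ∂μ ≤ (A * t) * K := by
      rw [hcompl]
      refine hKtail (A * t) (Z t) (by positivity) hZi hZpos (fun y hy => ?_)
      have := hdecay t ht y hy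
      have hexp : -(d * β) - (n : ℝ) = -(d * β + n) := by ring
      rwa [hexp] at this
    have hb : ∀ y ∈ sBᶜ, Z t y * |u (x - y) - u x| ≤ Z t y * (2 * M) := by
      intro y _
      refine mul_le_mul_of_nonneg_left ?_ (hZpos y)
      calc |u (x - y) - u x| ≤ |u (x - y)| + |u x| := abs_sub _ _
        _ ≤ M + M := add_le_add (hM _) (hM _)
        _ = 2 * M := by ring
    calc ∫ y in sBᶜ, Z t y * |u (x - y) - u x| ∂μ ≤ ∫ y in sBᶜ, Z t y * (2 * M) ∂μ :=
          setIntegral_mono_on habs.integrableOn (hZi.mul_const _).integrableOn hsm.compl hb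
      _ = (∫ y in sBᶜ, Z t y ∂μ) * (2 * M) := integral_mul_const _ _
      _ ≤ ((A * t) * K) * (2 * M) := by
          refine mul_le_mul_of_nonneg_right htail (by positivity)
      _ ≤ ε / 2 := by
          have h3 : (2 * M * A * K) * t ≤ (2 * M * A * K + 1) * δ := by
            have hco : (0:ℝ) ≤ 2 * M * A * K := by positivity
            calc (2 * M * A * K) * t ≤ (2 * M * A * K) * δ :=
                  mul_le_mul_of_nonneg_left htδ.le hco
              _ ≤ (2 * M * A * K + 1) * δ :=
                  mul_le_mul_of_nonneg_right (by linarith) hδpos.le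
          have h4 : (2 * M * A * K + 1) * δ = ε / 2 := by
            rw [hδ]
            field_simp
          calc ((A * t) * K) * (2 * M) = (2 * M * A * K) * t := by ring
            _ ≤ (2 * M * A * K + 1) * δ := h3
            _ = ε / 2 := h4
  calc |∫ y, Z t y * (u (x - y) - u x) ∂μ| ≤ _ := hkey
    _ = _ + _ := hsplit
    _ ≤ ε / 2 + ε / 2 := add_le_add h1 h2
    _ = ε := by ring

/-- The semigroup operators: `T_0 u = u` and `T_t u = Z_t * u` for `t ≠ 0`. -/
noncomputable def Tt (μ : Measure (Fin n → ℚ_[p])) (Z : ℝ → (Fin n → ℚ_[p]) → ℝ)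
    (t : ℝ) (u : (Fin n → ℚ_[p]) → ℝ) (x : Fin n → ℚ_[p]) : ℝ :=
  if t = 0 then u x else ∫ y, Z t (x - y) * u y ∂μ

/-- The operators built from the heat kernel of an elliptic pseudo-differential operator form
a Feller semigroup on `ℚ_p^n`: a strongly continuous semigroup of positive contraction
operators on `C₀(ℚ_p^n)` preserving `C₀(ℚ_p^n)`. -/
theorem Tt_isFellerSemigroup
    (μ : Measure (Fin n → ℚ_[p])) [μ.IsAddHaarMeasure]
    (Z : ℝ → (Fin n → ℚ_[p]) → ℝ)
    (hposZ : ∀ t : ℝ, 0 < t → ∀ x, 0 ≤ Z t x)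
    (hcont : ∀ t : ℝ, 0 < t → Continuous (Z t))
    (hint : ∀ t : ℝ, 0 < t → Integrable (Z t) μ)
    (hone : ∀ t : ℝ, 0 < t → ∫ x, Z t x ∂μ = 1)
    (hCK : ∀ t s : ℝ, 0 < t → 0 < s → ∀ x : Fin n → ℚ_[p],
      Z (t + s) x = ∫ y, Z t (x - y) * Z s y ∂μ)
    (A d β : ℝ) (hA : 0 < A) (hd : 0 < d) (hβ : 0 < β)
    (hdecay : ∀ t : ℝ, 0 < t → ∀ x : Fin n → ℚ_[p], x ≠ 0 →
      Z t x ≤ A * t * ‖x‖ ^ (-(d * β) - (n : ℝ))) :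
    -- each `T_t` maps `C₀` into itself and is a contraction for the sup norm
    (∀ t : ℝ, 0 ≤ t → ∀ u : (Fin n → ℚ_[p]) → ℝ, Continuous u →
      Tendsto u (cocompact (Fin n → ℚ_[p])) (𝓝 0) →
      Continuous (Tt μ Z t u) ∧
      Tendsto (Tt μ Z t u) (cocompact (Fin n → ℚ_[p])) (𝓝 0) ∧
      ∀ C : ℝ, 0 ≤ C → (∀ y, |u y| ≤ C) → ∀ x, |Tt μ Z t u x| ≤ C) ∧
    -- semigroup property
    (∀ t s : ℝ, 0 ≤ t → 0 ≤ s → ∀ u : (Fin n → ℚ_[p]) → ℝ, Continuous u →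
      Tendsto u (cocompact (Fin n → ℚ_[p])) (𝓝 0) →
      Tt μ Z (t + s) u = Tt μ Z t (Tt μ Z s u)) ∧
    -- strong continuity at `t = 0`
    (∀ u : (Fin n → ℚ_[p]) → ℝ, Continuous u →
      Tendsto u (cocompact (Fin n → ℚ_[p])) (𝓝 0) →
      ∀ ε : ℝ, 0 < ε → ∃ δ : ℝ, 0 < δ ∧ ∀ t : ℝ, 0 < t → t < δ →
        ∀ x, |Tt μ Z t u x - u x| ≤ ε) ∧
    -- positivity
    (∀ t : ℝ, 0 ≤ t → ∀ u : (Fin n → ℚ_[p]) → ℝ, Continuous u →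
      Tendsto u (cocompact (Fin n → ℚ_[p])) (𝓝 0) →
      (∀ y, 0 ≤ u y) → ∀ x, 0 ≤ Tt μ Z t u x) := by
  have hTt0 : ∀ u : (Fin n → ℚ_[p]) → ℝ, Tt μ Z 0 u = u := by
    intro u; funext x; simp [Tt]
  have hTtpos : ∀ (t : ℝ), t ≠ 0 → ∀ u : (Fin n → ℚ_[p]) → ℝ,
      Tt μ Z t u = fun x => ∫ y, Z t (x - y) * u y ∂μ := by
    intro t ht u; funext x; simp [Tt, ht]
  refine ⟨?_, ?_, ?_, ?_⟩
  · -- maps C₀ to C₀ and contraction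
    intro t ht u hu h0
    rcases eq_or_lt_of_le ht with h | h
    · rw [← h, hTt0 u]
      exact ⟨hu, h0, fun C _ hC x => hC x⟩
    · obtain ⟨M, hM0, hM⟩ := my_bdd u hu h0
      rw [hTtpos t h.ne' u]
      refine ⟨my_continuous μ (Z t) u (hint t h) hu M hM, ?_, ?_⟩
      · exact my_vanish μ (Z t) u (hint t h) (hposZ t h) (hone t h) hu h0 M hM0 hM
      · intro C hC0 hC x
        exact my_contract μ (Z t) u (hint t h) (hposZ t h) (hone t h) hu C hC0 hC x
  · -- semigroup property
    intro t s ht hs u hu h0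
    rcases eq_or_lt_of_le ht with h | h
    · rw [← h, zero_add, hTt0]
    rcases eq_or_lt_of_le hs with h' | h'
    · rw [← h', add_zero, hTt0]
    obtain ⟨M, hM0, hM⟩ := my_bdd u hu h0
    have hts : t + s ≠ 0 := by positivity
    rw [hTtpos (t + s) hts u, hTtpos t h.ne']
    funext x
    have hkernel : ∀ y : Fin n → ℚ_[p],
        Z (t + s) (x - y) = ∫ w, Z t (x - w) * Z s (w - y) ∂μ := by
      intro y
      rw [hCK t s h h' (x - y)]
      have := integral_sub_right_eq_self (fun w => Z t ((x - y) - w) * Z s w) (μ := μ) y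
      rw [← this]
      congr 1; funext w
      rw [sub_sub_sub_cancel_right]
    have lhs_eq : ∫ y, Z (t + s) (x - y) * u y ∂μ
        = ∫ y, (∫ w, Z t (x - w) * Z s (w - y) ∂μ) * u y ∂μ := by
      congr 1; funext y; rw [hkernel y]
    rw [lhs_eq,
      my_semigroup_core μ (Z t) (Z s) u (hcont t h) (hint t h) (hposZ t h)
        (hcont s h') (hint s h') (hposZ s h') (hone s h') hu M hM0 hM x]
    congr 1; funext w
    rw [hTtpos s h'.ne' u]
  · -- strong continuity
    intro u hu h0 ε hε
    obtain ⟨δ, hδ, hδ'⟩ := my_strong μ Z hposZ hint hone A d β hA hd hβ hdecay u hu h0 ε hε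
    refine ⟨δ, hδ, fun t ht htδ x => ?_⟩
    rw [hTtpos t ht.ne' u]
    exact hδ' t ht htδ x
  · -- positivity
    intro t ht u hu h0 hu0 x
    rcases eq_or_lt_of_le ht with h | h
    · rw [← h, hTt0]; exact hu0 x
    · rw [hTtpos t h.ne' u]
      exact integral_nonneg fun y => mul_nonneg (hposZ t h _) (hu0 y)
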